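/- Statement C(2) is false: there exists a matroid M of rank n (namely n = 3) on 2n elements that is a disjoint union of 2 bases, together with pairwise disjoint independent sets I_1,...,I_n with |I_i| ≤ 2, such that no n×2 grid exists containing each element exactly once with the elements of I_i in row i and both columns bases of M. Specifically, the graphic matroid M(K_4) with I_1, I_2, I_3 the three pairs of non-incident (opposite) edges of K_4 is such a counterexample. -/

import Mathlib

open Set Function Matroid SimpleGraph

/-- The edge set of the complete graph `K₄` on vertices `Fin 4`. -/
def K4edges : Set (Sym2 (Fin 4)) := {e | ¬ e.IsDiag}

/-- An edge set is acyclic iff the simple graph it spans has no cycles. -/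
def EdgeAcyclic (S : Set (Sym2 (Fin 4))) : Prop :=
  (SimpleGraph.fromEdgeSet S).IsAcyclic

/-- A spanning tree of `K₄`, viewed as a set of edges. -/
def K4SpanningTree (T : Set (Sym2 (Fin 4))) : Prop :=
  T ⊆ K4edges ∧ EdgeAcyclic T ∧ (SimpleGraph.fromEdgeSet T).Connected

/-- The three pairs of opposite (non-incident) edges of `K₄`. -/
def oppPairs : Fin 3 → Set (Sym2 (Fin 4)) :=
  ![{s(0, 1), s(2, 3)}, {s(0, 2), s(1, 3)}, {s(0, 3), s(1, 2)}]

open Set Function Matroid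

/-- Rota's basis conjecture for rank `n`. -/
def RotaConj (n : ℕ) : Prop :=
  ∀ (α : Type) (M : Matroid α) (B : Fin n → Set α),
    (∀ i, M.IsBase (B i)) → (∀ i, (B i).ncard = n) →
    Pairwise (Function.onFun Disjoint B) → (⋃ i, B i) = M.E →
    ∃ g : Fin n → Fin n → α,
      Function.Injective (fun p : Fin n × Fin n => g p.1 p.2) ∧
      (∀ x ∈ M.E, ∃ i j, g i j = x) ∧
      (∀ i, {x | ∃ j, g i j = x} = B i) ∧
      (∀ j, M.IsBase {x | ∃ i, g i j = x})

/-- The statement `C(k)` from the paper. -/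
def CStatement (k : ℕ) : Prop :=
  ∀ (α : Type) (n : ℕ) (M : Matroid α) (B : Fin k → Set α) (I : Fin n → Set α),
    (∀ j, M.IsBase (B j)) → (∀ j, (B j).ncard = n) →
    Pairwise (Function.onFun Disjoint B) → (⋃ j, B j) = M.E →
    (∀ i, M.Indep (I i)) → Pairwise (Function.onFun Disjoint I) →
    (∀ i, (I i).ncard ≤ k) →
    ∃ g : Fin n → Fin k → α,
      Function.Injective (fun p : Fin n × Fin k => g p.1 p.2) ∧
      (∀ x ∈ M.E, ∃ i j, g i j = x) ∧
      (∀ i, I i ⊆ {x | ∃ j, g i j = x}) ∧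
      (∀ j, M.IsBase {x | ∃ i, g i j = x})

/-! ### Auxiliary machinery: edges of `K₄` indexed by `Fin 6` -/

set_option maxRecDepth 40000

/-- The six edges of `K₄`. -/
def eIdx : Fin 6 → Sym2 (Fin 4) := ![s(0,1), s(0,2), s(0,3), s(1,2), s(1,3), s(2,3)]

/-- The seven cycles of `K₄` (4 triangles, 3 quadrilaterals), as index sets. -/
def cyc6 : List (Finset (Fin 6)) :=
  [{0,3,1}, {0,4,2}, {1,5,2}, {3,5,4}, {0,3,5,2}, {0,4,5,1}, {1,3,4,2}]

/-- The decidable "no cycle" predicate on index sets. -/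
def Q6 (t : Finset (Fin 6)) : Prop := ∀ C ∈ cyc6, ¬ C ⊆ t
instance : DecidablePred Q6 := fun _ => by unfold Q6; infer_instance

lemma eIdx_inj : Function.Injective eIdx := by decide
lemma eIdx_not_diag : ∀ i, ¬ (eIdx i).IsDiag := by decide
lemma eIdx_surj : ∀ x : Sym2 (Fin 4), ¬ x.IsDiag → ∃ i, eIdx i = x := by decide
lemma eIdx_mem_K4 (i : Fin 6) : eIdx i ∈ K4edges := eIdx_not_diag i
lemma augQ : ∀ s t : Finset (Fin 6), Q6 s → Q6 t → s.card < t.card →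
    ∃ i ∈ t, i ∉ s ∧ Q6 (insert i s) := by decide
lemma maxQ1 : ∀ u : Finset (Fin 6), Q6 u → {0,3,5} ⊆ u → u ⊆ {0,3,5} := by decide
lemma maxQ2 : ∀ u : Finset (Fin 6), Q6 u → {1,2,4} ⊆ u → u ⊆ {1,2,4} := by decide
lemma tri_memQ : ∀ a b c : Fin 4, a ≠ b → b ≠ c → c ≠ a →
    ∃ C ∈ cyc6, ∀ i ∈ C, eIdx i = s(a,b) ∨ eIdx i = s(b,c) ∨ eIdx i = s(c,a) := by decide
lemma quad_memQ : ∀ a b c d : Fin 4, a ≠ b → b ≠ c → c ≠ d → d ≠ a → a ≠ c → b ≠ d →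
    ∃ C ∈ cyc6, ∀ i ∈ C,
      eIdx i = s(a,b) ∨ eIdx i = s(b,c) ∨ eIdx i = s(c,d) ∨ eIdx i = s(d,a) := by decide

lemma swapMem {S : Set (Sym2 (Fin 4))} {a b : Fin 4} (h : s(a,b) ∈ S) : s(b,a) ∈ S := by
  rwa [Sym2.eq_swap]

/-! ### Cycles give non-acyclicity -/

lemma tri_not_acyclic {S : Set (Sym2 (Fin 4))} {a b c : Fin 4}
    (hab : a ≠ b) (hbc : b ≠ c) (hca : c ≠ a)
    (h1 : s(a,b) ∈ S) (h2 : s(b,c) ∈ S) (h3 : s(a,c) ∈ S) : ¬ EdgeAcyclic S := by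
  intro h
  have hadj1 : (fromEdgeSet S).Adj a b := (fromEdgeSet_adj S).2 ⟨h1, hab⟩
  have hadj2 : (fromEdgeSet S).Adj b c := (fromEdgeSet_adj S).2 ⟨h2, hbc⟩
  have hadj3 : (fromEdgeSet S).Adj c a := (fromEdgeSet_adj S).2 ⟨swapMem h3, hca⟩
  refine h (Walk.cons hadj1 (Walk.cons hadj2 (Walk.cons hadj3 Walk.nil))) ?_
  simp [Walk.isCycle_def, Walk.isTrail_def, hab, hbc, hca, hab.symm, hbc.symm, hca.symm,
    Sym2.eq_iff]

lemma quad_not_acyclic {S : Set (Sym2 (Fin 4))} {a b c d : Fin 4}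
    (hab : a ≠ b) (hbc : b ≠ c) (hcd : c ≠ d) (hda : d ≠ a) (hac : a ≠ c) (hbd : b ≠ d)
    (h1 : s(a,b) ∈ S) (h2 : s(b,c) ∈ S) (h3 : s(c,d) ∈ S) (h4 : s(d,a) ∈ S) :
    ¬ EdgeAcyclic S := by
  intro h
  have hadj1 : (fromEdgeSet S).Adj a b := (fromEdgeSet_adj S).2 ⟨h1, hab⟩
  have hadj2 : (fromEdgeSet S).Adj b c := (fromEdgeSet_adj S).2 ⟨h2, hbc⟩
  have hadj3 : (fromEdgeSet S).Adj c d := (fromEdgeSet_adj S).2 ⟨h3, hcd⟩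
  have hadj4 : (fromEdgeSet S).Adj d a := (fromEdgeSet_adj S).2 ⟨h4, hda⟩
  refine h (Walk.cons hadj1 (Walk.cons hadj2 (Walk.cons hadj3 (Walk.cons hadj4 Walk.nil)))) ?_
  simp [Walk.isCycle_def, Walk.isTrail_def, hab, hbc, hcd, hda, hac, hbd,
    hab.symm, hbc.symm, hcd.symm, hda.symm, hac.symm, hbd.symm, Sym2.eq_iff]

/-! ### Any cycle yields one of the seven cycle index sets -/

lemma cycle_gives {S : Set (Sym2 (Fin 4))} {v : Fin 4} (c : (fromEdgeSet S).Walk v v)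
    (hc : c.IsCycle) : ∃ C ∈ cyc6, ∀ i ∈ C, eIdx i ∈ S := by
  have h3 : 3 ≤ c.length := hc.three_le_length
  rw [Walk.isCycle_def] at hc
  obtain ⟨ht, hne, hnd⟩ := hc
  have h4 : c.length ≤ 4 := by
    have := hnd.length_le_card
    simpa using this
  clear hne ht
  cases c with
  | nil => simp at h3
  | cons h1 p => cases p with
    | nil => simp at h3
    | cons h2 p => cases p with
      | nil => simp at h3
      | cons ha p => cases p with
        | nil =>
          rename_i a b
          obtain ⟨C, hC, hm⟩ := tri_memQ v a b h1.ne h2.ne ha.ne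
          refine ⟨C, hC, fun i hi => ?_⟩
          rcases hm i hi with h | h | h <;> rw [h]
          · exact ((fromEdgeSet_adj S).1 h1).1
          · exact ((fromEdgeSet_adj S).1 h2).1
          · exact ((fromEdgeSet_adj S).1 ha).1
        | cons hb p => cases p with
          | nil =>
            rename_i a b d
            simp [List.Nodup] at hnd
            obtain ⟨⟨hab, had, -⟩, ⟨hbd, hbv⟩, -⟩ := hnd
            obtain ⟨C, hC, hm⟩ := quad_memQ v a b d h1.ne h2.ne ha.ne hb.ne
              (fun h => hbv h.symm) had
            refine ⟨C, hC, fun i hi => ?_⟩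
            rcases hm i hi with h | h | h | h <;> rw [h]
            · exact ((fromEdgeSet_adj S).1 h1).1
            · exact ((fromEdgeSet_adj S).1 h2).1
            · exact ((fromEdgeSet_adj S).1 ha).1
            · exact ((fromEdgeSet_adj S).1 hb).1
          | cons hc p => simp [Walk.length_cons] at h4; omega

/-! ### The combinatorial characterisation of acyclicity -/

lemma acyclic_iff (S : Set (Sym2 (Fin 4))) :
    EdgeAcyclic S ↔ ∀ C ∈ cyc6, ¬ ∀ i ∈ C, eIdx i ∈ S := by
  constructor
  · intro h C hC hall
    fin_cases hC
    · exact tri_not_acyclic (a := 0) (b := 1) (c := 2) (by decide) (by decide) (by decide)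
        (hall 0 (by decide)) (hall 3 (by decide)) (hall 1 (by decide)) h
    · exact tri_not_acyclic (a := 0) (b := 1) (c := 3) (by decide) (by decide) (by decide)
        (hall 0 (by decide)) (hall 4 (by decide)) (hall 2 (by decide)) h
    · exact tri_not_acyclic (a := 0) (b := 2) (c := 3) (by decide) (by decide) (by decide)
        (hall 1 (by decide)) (hall 5 (by decide)) (hall 2 (by decide)) h
    · exact tri_not_acyclic (a := 1) (b := 2) (c := 3) (by decide) (by decide) (by decide)
        (hall 3 (by decide)) (hall 5 (by decide)) (hall 4 (by decide)) h
    · exact quad_not_acyclic (a := 0) (b := 1) (c := 2) (d := 3) (by decide) (by decide)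
        (by decide) (by decide) (by decide) (by decide)
        (hall 0 (by decide)) (hall 3 (by decide)) (hall 5 (by decide))
        (swapMem (hall 2 (by decide))) h
    · exact quad_not_acyclic (a := 0) (b := 1) (c := 3) (d := 2) (by decide) (by decide)
        (by decide) (by decide) (by decide) (by decide)
        (hall 0 (by decide)) (hall 4 (by decide)) (swapMem (hall 5 (by decide)))
        (swapMem (hall 1 (by decide))) h
    · exact quad_not_acyclic (a := 0) (b := 2) (c := 1) (d := 3) (by decide) (by decide)
        (by decide) (by decide) (by decide) (by decide)
        (hall 1 (by decide)) (swapMem (hall 3 (by decide))) (hall 4 (by decide))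
        (swapMem (hall 2 (by decide))) h
  · intro hno v c hc
    obtain ⟨C, hC, hm⟩ := cycle_gives c hc
    exact hno C hC hm

/-! ### Translating sets of edges to index sets -/

/-- The index set of a set of edges. -/
noncomputable def idxS (S : Set (Sym2 (Fin 4))) : Finset (Fin 6) :=
  @Finset.filter _ (fun i => eIdx i ∈ S) (Classical.decPred _) Finset.univ

lemma mem_idxS {S : Set (Sym2 (Fin 4))} {i : Fin 6} : i ∈ idxS S ↔ eIdx i ∈ S := by
  simp [idxS]

lemma image_idxS {S : Set (Sym2 (Fin 4))} (hS : S ⊆ K4edges) : eIdx '' ↑(idxS S) = S := by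
  ext x
  constructor
  · rintro ⟨i, hi, rfl⟩
    exact mem_idxS.1 (by simpa using hi)
  · intro hx
    obtain ⟨i, rfl⟩ := eIdx_surj x (hS hx)
    exact ⟨i, by simpa using mem_idxS.2 hx, rfl⟩

lemma idxS_image (t : Finset (Fin 6)) : idxS (eIdx '' ↑t) = t := by
  ext i
  simp only [mem_idxS, Set.mem_image, Finset.mem_coe]
  constructor
  · rintro ⟨j, hj, hji⟩
    rwa [← eIdx_inj hji]
  · intro hi
    exact ⟨i, hi, rfl⟩

lemma idxS_mono {S T : Set (Sym2 (Fin 4))} (h : S ⊆ T) : idxS S ⊆ idxS T :=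
  fun i hi => mem_idxS.2 (h (mem_idxS.1 hi))

lemma idxS_insert (x : Fin 6) (S : Set (Sym2 (Fin 4))) :
    idxS (insert (eIdx x) S) = insert x (idxS S) := by
  ext i
  simp only [mem_idxS, Set.mem_insert_iff, Finset.mem_insert]
  rw [eIdx_inj.eq_iff]

lemma acyclic_iff_Q (S : Set (Sym2 (Fin 4))) : EdgeAcyclic S ↔ Q6 (idxS S) := by
  rw [acyclic_iff]
  unfold Q6
  refine forall₂_congr fun C _ => ?_
  rw [not_iff_not]
  exact ⟨fun h i hi => mem_idxS.2 (h i hi), fun h i hi => mem_idxS.1 (h hi)⟩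

lemma ncard_idxS {S : Set (Sym2 (Fin 4))} (hS : S ⊆ K4edges) : S.ncard = (idxS S).card := by
  rw [← image_idxS hS, Set.ncard_image_of_injective _ eIdx_inj, Set.ncard_coe_finset,
    idxS_image]

/-! ### The graphic matroid of `K₄` -/

/-- Independence: a subset of the edges of `K₄` that is acyclic. -/
def MIndep (S : Set (Sym2 (Fin 4))) : Prop := S ⊆ K4edges ∧ EdgeAcyclic S

/-- The graphic matroid `M(K₄)`. -/
noncomputable def K4M : Matroid (Sym2 (Fin 4)) :=
  (IndepMatroid.ofFinite (Set.toFinite K4edges) MIndep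
    (indep_empty := ⟨empty_subset _, (acyclic_iff ∅).2 (by decide)⟩)
    (indep_subset := fun I J hJ hIJ => ⟨hIJ.trans hJ.1,
      (acyclic_iff I).2 fun C hC hall => (acyclic_iff J).1 hJ.2 C hC
        fun i hi => hIJ (hall i hi)⟩)
    (indep_aug := by
      intro I J hI hJ hcard
      obtain ⟨i, hit, his, hQ⟩ := augQ (idxS I) (idxS J)
        ((acyclic_iff_Q I).1 hI.2) ((acyclic_iff_Q J).1 hJ.2)
        (by rw [← ncard_idxS hI.1, ← ncard_idxS hJ.1]; exact hcard)
      refine ⟨eIdx i, mem_idxS.1 hit, fun h => his (mem_idxS.2 h), ?_, ?_⟩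
      · exact insert_subset (eIdx_mem_K4 i) hI.1
      · rw [acyclic_iff_Q, idxS_insert]
        exact hQ)
    (subset_ground := fun I hI => hI.1)).matroid

lemma K4M_E : K4M.E = K4edges := rfl

lemma K4M_indep_iff (S : Set (Sym2 (Fin 4))) :
    K4M.Indep S ↔ S ⊆ K4edges ∧ EdgeAcyclic S := by
  rw [K4M, IndepMatroid.matroid_indep_iff]
  exact Iff.rfl

lemma indepF (t : Finset (Fin 6)) (h : Q6 t) : K4M.Indep (eIdx '' ↑t) := by
  rw [K4M_indep_iff]
  refine ⟨?_, ?_⟩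
  · rintro x ⟨i, -, rfl⟩
    exact eIdx_mem_K4 i
  · rw [acyclic_iff_Q, idxS_image]
    exact h

lemma baseF (t : Finset (Fin 6)) (h1 : Q6 t) (h2 : ∀ u, Q6 u → t ⊆ u → u ⊆ t) :
    K4M.IsBase (eIdx '' ↑t) := by
  rw [isBase_iff_maximal_indep]
  refine ⟨indepF t h1, fun J hJ hle => ?_⟩
  have hJ' := (K4M_indep_iff J).1 hJ
  have hsub : t ⊆ idxS J := by
    intro i hi
    exact mem_idxS.2 (hle ⟨i, hi, rfl⟩)
  have := h2 (idxS J) ((acyclic_iff_Q J).1 hJ'.2) hsub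
  calc J = eIdx '' ↑(idxS J) := (image_idxS hJ'.1).symm
    _ ⊆ eIdx '' ↑t := Set.image_mono (by exact_mod_cast this)

/-- First base: the path 0-1-2-3. -/
noncomputable def B1 : Set (Sym2 (Fin 4)) := eIdx '' ↑({0,3,5} : Finset (Fin 6))
/-- Second base: the path 2-0-3-1. -/
noncomputable def B2 : Set (Sym2 (Fin 4)) := eIdx '' ↑({1,2,4} : Finset (Fin 6))

lemma baseB1 : K4M.IsBase B1 := baseF _ (by decide) maxQ1
lemma baseB2 : K4M.IsBase B2 := baseF _ (by decide) maxQ2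

lemma ncardF (t : Finset (Fin 6)) : (eIdx '' ↑t).ncard = t.card := by
  rw [Set.ncard_image_of_injective _ eIdx_inj, Set.ncard_coe_finset]

lemma base_ncard {B : Set (Sym2 (Fin 4))} (hB : K4M.IsBase B) : B.ncard = 3 := by
  rw [hB.ncard_eq_ncard_of_isBase baseB1, B1, ncardF]
  decide

lemma oppPairs_eq : ∀ i : Fin 3,
    oppPairs i = eIdx '' ↑(![{0,5}, {1,4}, {2,3}] i : Finset (Fin 6)) := by
  intro i
  fin_cases i <;> (simp [oppPairs, eIdx, Set.image_insert_eq]; try rfl)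

lemma indep_oppPairs : ∀ i, K4M.Indep (oppPairs i) := by
  intro i
  rw [oppPairs_eq i]
  fin_cases i <;> exact indepF _ (by decide)

lemma disjoint_oppPairs : Pairwise (Function.onFun Disjoint oppPairs) := by
  intro i j hij
  unfold Function.onFun
  rw [oppPairs_eq i, oppPairs_eq j, Set.disjoint_image_iff eIdx_inj]
  fin_cases i <;> fin_cases j <;>
    first
      | exact absurd rfl hij
      | (rw [show ((↑(_ : Finset (Fin 6)) : Set (Fin 6)) = _) from rfl, Finset.disjoint_coe]
         decide)

lemma ncard_oppPairs : ∀ i, (oppPairs i).ncard ≤ 2 := by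
  intro i
  rw [oppPairs_eq i, ncardF]
  fin_cases i <;> decide

lemma disjoint_B12 : Disjoint B1 B2 := by
  rw [B1, B2, Set.disjoint_image_iff eIdx_inj, Finset.disjoint_coe]
  decide

lemma union_B12 : B1 ∪ B2 = K4M.E := by
  rw [K4M_E, B1, B2, ← Set.image_union, ← Finset.coe_union]
  have h6 : ({0,3,5} : Finset (Fin 6)) ∪ {1,2,4} = Finset.univ := by decide
  rw [h6]
  ext x
  simp only [Finset.coe_univ, Set.image_univ, Set.mem_range]
  exact ⟨fun ⟨i, hi⟩ => hi ▸ eIdx_mem_K4 i, fun hx => eIdx_surj x hx⟩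

/-! ### No valid grid exists -/

lemma no_grid :
    ¬ ∃ g : Fin 3 → Fin 2 → Sym2 (Fin 4),
        Function.Injective (fun p : Fin 3 × Fin 2 => g p.1 p.2) ∧
        (∀ x ∈ K4M.E, ∃ i j, g i j = x) ∧
        (∀ i, oppPairs i ⊆ {x | ∃ j, g i j = x}) ∧
        (∀ j, K4M.IsBase {x | ∃ i, g i j = x}) := by
  rintro ⟨g, -, -, hrow, hcol⟩
  have notAcy : ∀ j, EdgeAcyclic {x | ∃ i, g i j = x} := fun j =>
    ((K4M_indep_iff _).1 (hcol j).indep).2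
  have key : ∀ (i : Fin 3) (x y : Sym2 (Fin 4)), x ≠ y → oppPairs i = {x, y} →
      (g i 0 = x ∧ g i 1 = y) ∨ (g i 0 = y ∧ g i 1 = x) := by
    intro i x y hxy hopp
    obtain ⟨jx, hjx⟩ : ∃ j, g i j = x := hrow i (by rw [hopp]; exact Set.mem_insert _ _)
    obtain ⟨jy, hjy⟩ : ∃ j, g i j = y :=
      hrow i (by rw [hopp]; exact Set.mem_insert_of_mem _ rfl)
    fin_cases jx <;> fin_cases jy <;> simp_all
  obtain h0 | h0 := key 0 s(0,1) s(2,3) (by decide) rfl <;>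
  obtain h1 | h1 := key 1 s(0,2) s(1,3) (by decide) rfl <;>
  obtain h2 | h2 := key 2 s(0,3) s(1,2) (by decide) rfl
  · exact tri_not_acyclic (S := {x | ∃ i, g i 1 = x}) (a := 1) (b := 2) (c := 3) (by decide) (by decide) (by decide)
      ⟨2, h2.2⟩ ⟨0, h0.2⟩ ⟨1, h1.2⟩ (notAcy 1)
  · exact tri_not_acyclic (S := {x | ∃ i, g i 0 = x}) (a := 0) (b := 1) (c := 2) (by decide) (by decide) (by decide)
      ⟨0, h0.1⟩ ⟨2, h2.1⟩ ⟨1, h1.1⟩ (notAcy 0)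
  · exact tri_not_acyclic (S := {x | ∃ i, g i 0 = x}) (a := 0) (b := 1) (c := 3) (by decide) (by decide) (by decide)
      ⟨0, h0.1⟩ ⟨1, h1.1⟩ ⟨2, h2.1⟩ (notAcy 0)
  · exact tri_not_acyclic (S := {x | ∃ i, g i 1 = x}) (a := 0) (b := 2) (c := 3) (by decide) (by decide) (by decide)
      ⟨1, h1.2⟩ ⟨0, h0.2⟩ ⟨2, h2.2⟩ (notAcy 1)
  · exact tri_not_acyclic (S := {x | ∃ i, g i 0 = x}) (a := 0) (b := 2) (c := 3) (by decide) (by decide) (by decide)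
      ⟨1, h1.1⟩ ⟨0, h0.1⟩ ⟨2, h2.1⟩ (notAcy 0)
  · exact tri_not_acyclic (S := {x | ∃ i, g i 1 = x}) (a := 0) (b := 1) (c := 3) (by decide) (by decide) (by decide)
      ⟨0, h0.2⟩ ⟨1, h1.2⟩ ⟨2, h2.2⟩ (notAcy 1)
  · exact tri_not_acyclic (S := {x | ∃ i, g i 1 = x}) (a := 0) (b := 1) (c := 2) (by decide) (by decide) (by decide)
      ⟨0, h0.2⟩ ⟨2, h2.2⟩ ⟨1, h1.2⟩ (notAcy 1)
  · exact tri_not_acyclic (S := {x | ∃ i, g i 0 = x}) (a := 1) (b := 2) (c := 3) (by decide) (by decide) (by decide)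
      ⟨2, h2.1⟩ ⟨0, h0.1⟩ ⟨1, h1.1⟩ (notAcy 0)

/-- `C(2)` is false, with `M(K₄)` and the three opposite edge pairs as counterexample. -/
theorem C2_false_via_K4 :
    ¬ CStatement 2 ∧
    ∃ M : Matroid (Sym2 (Fin 4)),
      M.E = K4edges ∧
      (∀ S, M.Indep S ↔ S ⊆ K4edges ∧ EdgeAcyclic S) ∧
      (∀ B, M.IsBase B → B.ncard = 3) ∧
      (∃ B₁ B₂, M.IsBase B₁ ∧ M.IsBase B₂ ∧ Disjoint B₁ B₂ ∧ B₁ ∪ B₂ = M.E) ∧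
      (∀ i, M.Indep (oppPairs i)) ∧
      Pairwise (Function.onFun Disjoint oppPairs) ∧
      (∀ i, (oppPairs i).ncard ≤ 2) ∧
      ¬ ∃ g : Fin 3 → Fin 2 → Sym2 (Fin 4),
          Function.Injective (fun p : Fin 3 × Fin 2 => g p.1 p.2) ∧
          (∀ x ∈ M.E, ∃ i j, g i j = x) ∧
          (∀ i, oppPairs i ⊆ {x | ∃ j, g i j = x}) ∧
          (∀ j, M.IsBase {x | ∃ i, g i j = x}) := by
  constructor
  · intro h
    have hbase : ∀ j : Fin 2, K4M.IsBase (![B1, B2] j) := by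
      intro j; fin_cases j
      · exact baseB1
      · exact baseB2
    have hcard : ∀ j : Fin 2, ((![B1, B2] j : Set (Sym2 (Fin 4)))).ncard = 3 := fun j =>
      base_ncard (hbase j)
    have hdisj : Pairwise (Function.onFun Disjoint ![B1, B2]) := by
      intro i j hij
      unfold Function.onFun
      fin_cases i <;> fin_cases j <;>
        first
          | exact absurd rfl hij
          | exact disjoint_B12
          | exact disjoint_B12.symm
    have hunion : (⋃ j, (![B1, B2] j : Set (Sym2 (Fin 4)))) = K4M.E := by
      rw [← union_B12]
      ext x
      simp [Set.mem_iUnion, Fin.exists_fin_two]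
    obtain ⟨g, hg⟩ := h (Sym2 (Fin 4)) 3 K4M ![B1, B2] oppPairs hbase hcard hdisj hunion
      indep_oppPairs disjoint_oppPairs ncard_oppPairs
    exact no_grid ⟨g, hg⟩
  · exact ⟨K4M, K4M_E, K4M_indep_iff, fun B hB => base_ncard hB,
      ⟨B1, B2, baseB1, baseB2, disjoint_B12, union_B12⟩,
      indep_oppPairs, disjoint_oppPairs, ncard_oppPairs, no_grid⟩
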